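/- arXiv:0910.3204 — 7 statements merged into one kernel-verified Lean document; each statement's English description precedes it below -/
import Mathlib

section
/- The function Q(x) = (5/2)^{1/3} · cosh^{-2/3}(3x/2) satisfies the ODE Q'' + Q^4 = Q on ℝ. -/
noncomputable def Q : ℝ → ℝ := fun x => (5/2 : ℝ) ^ ((1:ℝ)/3) * (Real.cosh (3*x/2)) ^ (-(2:ℝ)/3)

lemma hcosh_deriv (x : ℝ) : HasDerivAt (fun x : ℝ => Real.cosh (3*x/2)) (3/2 * Real.sinh (3*x/2)) x := by
  have h : HasDerivAt (fun x : ℝ => 3*x/2) (3/2) x := by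
    simpa using ((hasDerivAt_id x).const_mul (3:ℝ)).div_const 2
  simpa [mul_comm, Function.comp_def] using (Real.hasDerivAt_cosh (3*x/2)).comp x h

lemma hsinh_deriv (x : ℝ) : HasDerivAt (fun x : ℝ => Real.sinh (3*x/2)) (3/2 * Real.cosh (3*x/2)) x := by
  have h : HasDerivAt (fun x : ℝ => 3*x/2) (3/2) x := by
    simpa using ((hasDerivAt_id x).const_mul (3:ℝ)).div_const 2
  simpa [mul_comm, Function.comp_def] using (Real.hasDerivAt_sinh (3*x/2)).comp x h

lemma dQ (x : ℝ) : HasDerivAt Q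
    (-(5/2 : ℝ) ^ ((1:ℝ)/3) * (Real.sinh (3*x/2) * Real.cosh (3*x/2) ^ (-(5:ℝ)/3))) x := by
  have h1 := ((hcosh_deriv x).rpow_const (p := -(2:ℝ)/3)
    (Or.inl (Real.cosh_pos (3*x/2)).ne'))
  have h2 := h1.const_mul ((5/2 : ℝ) ^ ((1:ℝ)/3))
  refine h2.congr_deriv ?_
  have he : (-(2:ℝ)/3 - 1) = -(5:ℝ)/3 := by norm_num
  rw [← he]
  ring

lemma derivQ : deriv Q = fun x =>
    -(5/2 : ℝ) ^ ((1:ℝ)/3) * (Real.sinh (3*x/2) * Real.cosh (3*x/2) ^ (-(5:ℝ)/3)) := by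
  funext x; exact (dQ x).deriv

theorem Q_ode : ∀ x : ℝ, deriv (deriv Q) x + (Q x)^4 = Q x := by
  intro x
  set c : ℝ := (5/2 : ℝ) ^ ((1:ℝ)/3) with hc
  have hpos : (0:ℝ) < Real.cosh (3*x/2) := Real.cosh_pos _
  set h : ℝ := Real.cosh (3*x/2) with hh
  set s : ℝ := Real.sinh (3*x/2) with hs
  -- second derivative
  have hrpow5 : HasDerivAt (fun x : ℝ => Real.cosh (3*x/2) ^ (-(5:ℝ)/3))
      ((3/2 * s) * (-(5:ℝ)/3) * h ^ (-(5:ℝ)/3 - 1)) x :=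
    (hcosh_deriv x).rpow_const (Or.inl hpos.ne')
  have hprod : HasDerivAt (fun x : ℝ => Real.sinh (3*x/2) * Real.cosh (3*x/2) ^ (-(5:ℝ)/3))
      ((3/2 * h) * h ^ (-(5:ℝ)/3) + s * ((3/2 * s) * (-(5:ℝ)/3) * h ^ (-(5:ℝ)/3 - 1))) x :=
    (hsinh_deriv x).mul hrpow5
  have hd2 : HasDerivAt (deriv Q)
      (-c * ((3/2 * h) * h ^ (-(5:ℝ)/3) + s * ((3/2 * s) * (-(5:ℝ)/3) * h ^ (-(5:ℝ)/3 - 1)))) x := by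
    rw [derivQ]
    exact hprod.const_mul (-c)
  rw [hd2.deriv]
  have hQx : Q x = c * h ^ (-(2:ℝ)/3) := rfl
  rw [hQx]
  have he8 : (-(5:ℝ)/3 - 1) = -(8:ℝ)/3 := by norm_num
  rw [he8]
  -- key algebraic identities
  have e1 : h * h ^ (-(5:ℝ)/3) = h ^ (-(2:ℝ)/3) := by
    have h1 := (Real.rpow_add hpos 1 (-(5:ℝ)/3)).symm
    rw [Real.rpow_one] at h1
    rw [h1]; norm_num
  have e5 : s^2 = h^2 - 1 := by
    have := Real.cosh_sq_sub_sinh_sq (3*x/2)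
    rw [← hh, ← hs] at this
    nlinarith [this]
  have e2 : h^2 * h ^ (-(8:ℝ)/3) = h ^ (-(2:ℝ)/3) := by
    rw [← Real.rpow_natCast h 2, ← Real.rpow_add hpos]
    norm_num
  have e3 : c^4 = 5/2 * c := by
    rw [hc, ← Real.rpow_natCast ((5/2:ℝ) ^ ((1:ℝ)/3)) 4, ← Real.rpow_mul (by norm_num)]
    rw [show ((1:ℝ)/3 * (4:ℕ)) = 1 + (1:ℝ)/3 by push_cast; ring]
    rw [Real.rpow_add (by norm_num), Real.rpow_one]
  have e4 : (h ^ (-(2:ℝ)/3))^4 = h ^ (-(8:ℝ)/3) := by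
    rw [← Real.rpow_natCast (h ^ (-(2:ℝ)/3)) 4, ← Real.rpow_mul hpos.le]
    norm_num
  linear_combination (-3/2*c)*e1 + (5/2*c*(h ^ (-(8:ℝ)/3)))*e5 + (5/2*c)*e2 + ((h ^ (-(2:ℝ)/3))^4)*e3 + (5/2*c)*e4
end

section
/- The function Q satisfies the first-order identity (Q')^2 + (2/5)·Q^5 = Q^2 on ℝ. -/
theorem Q_first_order : ∀ x : ℝ, (deriv Q x)^2 + (2/5) * (Q x)^5 = (Q x)^2 := by
  intro x
  set y := Real.cosh (3*x/2) with hy_def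
  have hy : 0 < y := Real.cosh_pos _
  set a : ℝ := (5/2 : ℝ) ^ ((1:ℝ)/3) with ha_def
  set w : ℝ := y ^ (-(2:ℝ)/3) with hw_def
  have h1 : HasDerivAt (fun x : ℝ => 3*x/2) (3/2) x := by
    simpa using ((hasDerivAt_id x).const_mul (3:ℝ)).div_const 2
  have h2 : HasDerivAt (fun x : ℝ => Real.cosh (3*x/2)) (Real.sinh (3*x/2) * (3/2)) x :=
    h1.cosh
  have h3 : HasDerivAt (fun x : ℝ => Real.cosh (3*x/2) ^ (-(2:ℝ)/3))
      ((Real.sinh (3*x/2) * (3/2)) * (-(2:ℝ)/3) * y ^ (-(2:ℝ)/3 - 1)) x :=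
    h2.rpow_const (Or.inl hy.ne')
  have hQ : HasDerivAt Q (a * ((Real.sinh (3*x/2) * (3/2)) * (-(2:ℝ)/3) * y ^ (-(2:ℝ)/3 - 1))) x :=
    h3.const_mul a
  have hderiv : deriv Q x = a * ((Real.sinh (3*x/2) * (3/2)) * (-(2:ℝ)/3) * y ^ (-(2:ℝ)/3 - 1)) :=
    hQ.deriv
  have hsplit : y ^ (-(2:ℝ)/3 - 1) = w * y⁻¹ := by
    rw [hw_def, ← Real.rpow_neg_one y, ← Real.rpow_add hy]
    norm_num
  have hQx : Q x = a * w := rfl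
  have ha3 : a ^ 3 = 5/2 := by
    rw [ha_def, ← Real.rpow_natCast ((5/2:ℝ) ^ ((1:ℝ)/3)) 3, ← Real.rpow_mul (by norm_num)]
    norm_num
  have hw3 : w ^ 3 * y ^ 2 = 1 := by
    rw [hw_def, ← Real.rpow_natCast (y ^ (-(2:ℝ)/3)) 3, ← Real.rpow_mul hy.le,
      ← Real.rpow_natCast y 2, ← Real.rpow_add hy]
    norm_num
  have hs : Real.sinh (3*x/2) ^ 2 = y ^ 2 - 1 := by
    rw [hy_def]
    nlinarith [Real.cosh_sq_sub_sinh_sq (3*x/2)]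
  rw [hderiv, hsplit, hQx]
  set s := Real.sinh (3*x/2)
  field_simp
  linear_combination 5*a^2*w^2*hs + 2*a^2*w^5*y^2*ha3 + 5*a^2*w^2*hw3
end

section
/- The linearized operator L applied to Q^{5/2} satisfies L(Q^{5/2}) = -(21/4)·Q^{5/2}, i.e. Q^{5/2} is an eigenfunction of L with eigenvalue -21/4. -/
noncomputable def L (f : ℝ → ℝ) : ℝ → ℝ := fun x => -(deriv (deriv f)) x + f x - 4 * (Q x)^3 * f x

open Real

private lemma hcosh' (x : ℝ) : HasDerivAt (fun y => Real.cosh (3*y/2)) ((3/2) * Real.sinh (3*x/2)) x := by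
  have h1 : HasDerivAt (fun y : ℝ => 3*y/2) (3/2) x := by
    simpa using ((hasDerivAt_id x).const_mul (3:ℝ)).div_const 2
  exact ((Real.hasDerivAt_cosh (3*x/2)).comp x h1).congr_deriv (mul_comm _ _)

private lemma hsinh' (x : ℝ) : HasDerivAt (fun y => Real.sinh (3*y/2)) ((3/2) * Real.cosh (3*x/2)) x := by
  have h1 : HasDerivAt (fun y : ℝ => 3*y/2) (3/2) x := by
    simpa using ((hasDerivAt_id x).const_mul (3:ℝ)).div_const 2
  exact ((Real.hasDerivAt_sinh (3*x/2)).comp x h1).congr_deriv (mul_comm _ _)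

private lemma Qpow_eq (y : ℝ) : (Q y) ^ ((5:ℝ)/2) =
    (5/2 : ℝ) ^ ((5:ℝ)/6) * (Real.cosh (3*y/2)) ^ (-(5:ℝ)/3) := by
  have hc : (0:ℝ) < Real.cosh (3*y/2) := Real.cosh_pos _
  unfold Q
  rw [Real.mul_rpow (by positivity) (by positivity), ← Real.rpow_mul (by norm_num),
    ← Real.rpow_mul hc.le]
  norm_num

private lemma hd1 (x : ℝ) : HasDerivAt (fun y => (Q y) ^ ((5:ℝ)/2))
    ((5/2 : ℝ) ^ ((5:ℝ)/6) * (-(5:ℝ)/2) * Real.sinh (3*x/2) * (Real.cosh (3*x/2)) ^ (-(8:ℝ)/3)) x := by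
  have hc : (0:ℝ) < Real.cosh (3*x/2) := Real.cosh_pos _
  have h := (((hcosh' x).rpow_const (Or.inl hc.ne')).const_mul ((5/2 : ℝ) ^ ((5:ℝ)/6)) :
    HasDerivAt (fun y => (5/2 : ℝ) ^ ((5:ℝ)/6) * (Real.cosh (3*y/2)) ^ (-(5:ℝ)/3)) _ x)
  have hfun : (fun y => (Q y) ^ ((5:ℝ)/2)) =
      fun y => (5/2 : ℝ) ^ ((5:ℝ)/6) * (Real.cosh (3*y/2)) ^ (-(5:ℝ)/3) := funext Qpow_eq
  rw [hfun]
  refine h.congr_deriv ?_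
  have : (-(5:ℝ)/3 - 1) = -(8:ℝ)/3 := by norm_num
  rw [this]
  ring

private lemma hd2 (x : ℝ) : HasDerivAt (fun y => (5/2 : ℝ) ^ ((5:ℝ)/6) * (-(5:ℝ)/2) * Real.sinh (3*y/2) * (Real.cosh (3*y/2)) ^ (-(8:ℝ)/3))
    ((5/2 : ℝ) ^ ((5:ℝ)/6) * (-(5:ℝ)/2) *
      ((3/2) * Real.cosh (3*x/2) * (Real.cosh (3*x/2)) ^ (-(8:ℝ)/3)
        + Real.sinh (3*x/2) * ((3/2) * Real.sinh (3*x/2) * (-(8:ℝ)/3) * (Real.cosh (3*x/2)) ^ (-(11:ℝ)/3)))) x := by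
  have hc : (0:ℝ) < Real.cosh (3*x/2) := Real.cosh_pos _
  have hp := (hcosh' x).rpow_const (p := -(8:ℝ)/3) (Or.inl hc.ne')
  have h := ((hsinh' x).mul hp).const_mul ((5/2 : ℝ) ^ ((5:ℝ)/6) * (-(5:ℝ)/2))
  convert h using 1
  · rfl
  · rfl
  · funext y; simp only [Pi.mul_apply]; ring
  · rw [show (-(8:ℝ)/3 - 1) = -(11:ℝ)/3 by norm_num]

theorem L_eigen_Q52 :
    ∀ x : ℝ, L (fun y => (Q y) ^ ((5:ℝ)/2)) x = -(21/4) * (Q x) ^ ((5:ℝ)/2) := by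
  intro x
  have hc : (0:ℝ) < Real.cosh (3*x/2) := Real.cosh_pos _
  set c := Real.cosh (3*x/2) with hcdef
  set s := Real.sinh (3*x/2) with hsdef
  have hder1 : deriv (fun y => (Q y) ^ ((5:ℝ)/2)) =
      fun y => (5/2 : ℝ) ^ ((5:ℝ)/6) * (-(5:ℝ)/2) * Real.sinh (3*y/2) * (Real.cosh (3*y/2)) ^ (-(8:ℝ)/3) :=
    funext fun y => (hd1 y).deriv
  have hder2 : deriv (deriv (fun y => (Q y) ^ ((5:ℝ)/2))) x =
      (5/2 : ℝ) ^ ((5:ℝ)/6) * (-(5:ℝ)/2) *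
      ((3/2) * c * c ^ (-(8:ℝ)/3)
        + s * ((3/2) * s * (-(8:ℝ)/3) * c ^ (-(11:ℝ)/3))) := by
    rw [hder1]; exact (hd2 x).deriv
  have hQ3 : (Q x)^3 = (5/2 : ℝ) * c ^ (-(2:ℝ)) := by
    unfold Q
    rw [mul_pow, ← Real.rpow_natCast ((5/2:ℝ)^((1:ℝ)/3)) 3, ← Real.rpow_natCast (c ^ (-(2:ℝ)/3)) 3,
      ← Real.rpow_mul (by norm_num : (0:ℝ) ≤ 5/2), ← Real.rpow_mul hc.le]
    norm_num
  have e1 : c * c ^ (-(8:ℝ)/3) = c ^ (-(5:ℝ)/3) := by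
    nth_rewrite 1 [← Real.rpow_one c]
    rw [← Real.rpow_add hc]; norm_num
  have e2 : c ^ (2:ℕ) * c ^ (-(11:ℝ)/3) = c ^ (-(5:ℝ)/3) := by
    rw [← Real.rpow_natCast c 2, ← Real.rpow_add hc]; norm_num
  have e4 : c ^ (-(2:ℝ)) * c ^ (-(5:ℝ)/3) = c ^ (-(11:ℝ)/3) := by
    rw [← Real.rpow_add hc]; norm_num
  have hs2 : s ^ 2 = c ^ 2 - 1 := Real.sinh_sq _
  simp only [L]
  rw [hder2, hQ3, Qpow_eq x]
  linear_combination ((5/2:ℝ)^((5:ℝ)/6)) *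
    ((15/4)*e1 - 10*(c ^ (-(11:ℝ)/3))*hs2 - 10*e2 - 10*e4)
end

section
/- For every real r ≥ 1, ∫_ℝ Q^{r+3} dx = (5r/(2r+3)) · ∫_ℝ Q^r dx. -/
open Real MeasureTheory Filter Topology Set

lemma half_exp_le_cosh (t : ℝ) : Real.exp t / 2 ≤ Real.cosh t := by
  rw [Real.cosh_eq]
  have := Real.exp_pos (-t)
  linarith

lemma integrable_cosh_rpow {s : ℝ} (hs : 0 < s) :
    Integrable (fun x : ℝ => Real.cosh (3*x/2) ^ (-s)) := by
  have hcont : Continuous (fun x : ℝ => Real.cosh (3*x/2) ^ (-s)) := by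
    apply Continuous.rpow_const
    · exact Real.continuous_cosh.comp (by continuity)
    · exact fun x => Or.inl (ne_of_gt (Real.cosh_pos _))
  apply hcont.locallyIntegrable.integrable_of_isBigO_atTop_of_norm_isNegInvariant
      (g := fun x => Real.exp (-(3*s/2) * x))
  · refine Filter.Eventually.of_forall (fun x => ?_)
    simp only [Function.comp_apply]
    rw [show 3 * -x / 2 = -(3*x/2) by ring, Real.cosh_neg]
  · apply Asymptotics.IsBigO.of_bound (2 ^ s)
    filter_upwards [Filter.eventually_ge_atTop 0] with x hx
    have hc : Real.exp (3*x/2) / 2 ≤ Real.cosh (3*x/2) := half_exp_le_cosh _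
    have h1 : (Real.exp (3*x/2) / 2) ^ (-s) ≥ Real.cosh (3*x/2) ^ (-s) := by
      apply Real.rpow_le_rpow_of_nonpos (by positivity) hc (by linarith)
    have h2 : (Real.exp (3*x/2) / 2) ^ (-s) = 2 ^ s * Real.exp (-(3*s/2) * x) := by
      rw [Real.div_rpow (Real.exp_pos _).le (by norm_num), ← Real.exp_mul,
        Real.rpow_neg (by norm_num : (0:ℝ) ≤ 2), div_eq_mul_inv, inv_inv, mul_comm]
      congr 1
      ring
    rw [Real.norm_eq_abs, Real.norm_eq_abs, abs_of_pos (Real.rpow_pos_of_pos (Real.cosh_pos _) _),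
      abs_of_pos (Real.exp_pos _)]
    calc Real.cosh (3*x/2) ^ (-s) ≤ (Real.exp (3*x/2) / 2) ^ (-s) := h1
      _ = 2 ^ s * Real.exp (-(3*s/2) * x) := h2
  · exact ⟨Ioi 0, Ioi_mem_atTop 0, exp_neg_integrableOn_Ioi 0 (by positivity)⟩

lemma hasDerivAt_aux (s : ℝ) (x : ℝ) :
    HasDerivAt (fun x : ℝ => Real.sinh (3*x/2) * Real.cosh (3*x/2) ^ (-(s+1)))
      (3/2 * ((s+1) * Real.cosh (3*x/2) ^ (-(s+2)) - s * Real.cosh (3*x/2) ^ (-s))) x := by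
  have hc := Real.cosh_pos (x := 3*x/2)
  have hu : HasDerivAt (fun x : ℝ => 3*x/2) (3/2) x := by
    simpa using ((hasDerivAt_id x).const_mul (3:ℝ)).div_const 2
  have hsinh : HasDerivAt (fun x : ℝ => Real.sinh (3*x/2)) (Real.cosh (3*x/2) * (3/2)) x :=
    (Real.hasDerivAt_sinh _).comp x hu
  have hcosh : HasDerivAt (fun x : ℝ => Real.cosh (3*x/2)) (Real.sinh (3*x/2) * (3/2)) x :=
    (Real.hasDerivAt_cosh _).comp x hu
  have hpow : HasDerivAt (fun x : ℝ => Real.cosh (3*x/2) ^ (-(s+1)))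
      ((-(s+1) * Real.cosh (3*x/2) ^ (-(s+1) - 1)) * (Real.sinh (3*x/2) * (3/2))) x :=
    by have h := (Real.hasDerivAt_rpow_const (p := -(s+1)) (Or.inl hc.ne')).comp x hcosh; exact h
  have := hsinh.mul hpow
  refine this.congr_deriv ?_
  have e1 : Real.cosh (3*x/2) ^ (-(s+1) - 1) = Real.cosh (3*x/2) ^ (-(s+2)) := by
    congr 1; ring
  have e2 : Real.cosh (3*x/2) ^ (-s) = Real.cosh (3*x/2) * Real.cosh (3*x/2) ^ (-(s+1)) := by
    rw [show -s = 1 + -(s+1) by ring, Real.rpow_add hc, Real.rpow_one]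
  have e3 : Real.sinh (3*x/2) ^ 2 * Real.cosh (3*x/2) ^ (-(s+2))
      = Real.cosh (3*x/2) ^ (-s) - Real.cosh (3*x/2) ^ (-(s+2)) := by
    have hsq : Real.sinh (3*x/2) ^ 2 = Real.cosh (3*x/2) ^ 2 - 1 := by
      have := Real.cosh_sq (3*x/2); linarith
    rw [hsq, sub_mul, one_mul]
    congr 1
    rw [← Real.rpow_natCast (Real.cosh (3*x/2)) 2, ← Real.rpow_add hc]
    congr 1
    push_cast
    ring
  rw [e1]
  have : Real.sinh (3*x/2) * (-(s+1) * Real.cosh (3*x/2) ^ (-(s+2)) * (Real.sinh (3*x/2) * (3/2)))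
      = -(s+1) * (3/2) * (Real.sinh (3*x/2) ^ 2 * Real.cosh (3*x/2) ^ (-(s+2))) := by ring
  rw [this, e3, e2]
  ring

lemma tendsto_aux (s : ℝ) (hs : 0 < s) (l : Filter ℝ)
    (hl : Tendsto (fun x : ℝ => Real.cosh (3*x/2)) l atTop) :
    Tendsto (fun x : ℝ => Real.sinh (3*x/2) * Real.cosh (3*x/2) ^ (-(s+1))) l (𝓝 0) := by
  have h0 : Tendsto (fun x : ℝ => Real.cosh (3*x/2) ^ (-s)) l (𝓝 0) :=
    (tendsto_rpow_neg_atTop hs).comp hl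
  apply squeeze_zero_norm _ h0
  intro x
  have hc := Real.cosh_pos (x := 3*x/2)
  have hsa : |Real.sinh (3*x/2)| ≤ Real.cosh (3*x/2) := by
    rw [Real.abs_sinh]
    calc Real.sinh |3*x/2| ≤ Real.cosh |3*x/2| := by
          have h := Real.cosh_sub_sinh (|3*x/2|)
          have := Real.exp_pos (-(|3*x/2|))
          linarith
      _ = Real.cosh (3*x/2) := Real.cosh_abs _
  rw [Real.norm_eq_abs, abs_mul, abs_of_pos (Real.rpow_pos_of_pos hc _)]
  calc |Real.sinh (3*x/2)| * Real.cosh (3*x/2) ^ (-(s+1))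
      ≤ Real.cosh (3*x/2) * Real.cosh (3*x/2) ^ (-(s+1)) := by
        apply mul_le_mul_of_nonneg_right hsa (Real.rpow_pos_of_pos hc _).le
    _ = Real.cosh (3*x/2) ^ (-s) := by
        rw [show -s = 1 + -(s+1) by ring, Real.rpow_add hc, Real.rpow_one]

lemma cosh_int_rec (s : ℝ) (hs : 0 < s) :
    (s+1) * ∫ x : ℝ, Real.cosh (3*x/2) ^ (-(s+2))
      = s * ∫ x : ℝ, Real.cosh (3*x/2) ^ (-s) := by
  have hI1 := integrable_cosh_rpow hs
  have hI2 := integrable_cosh_rpow (show (0:ℝ) < s + 2 by linarith)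
  have hint : Integrable (fun x : ℝ =>
      3/2 * ((s+1) * Real.cosh (3*x/2) ^ (-(s+2)) - s * Real.cosh (3*x/2) ^ (-s))) :=
    (((hI2.const_mul (s+1)).sub (hI1.const_mul s)).const_mul (3/2))
  have l1 : Tendsto (fun x : ℝ => 3*x/2) atTop atTop :=
    (tendsto_id.const_mul_atTop (by norm_num : (0:ℝ) < 3)).atTop_div_const (by norm_num)
  have htop : Tendsto (fun x : ℝ => Real.cosh (3*x/2)) atTop atTop := by
    apply tendsto_atTop_mono (fun x => half_exp_le_cosh (3*x/2))
    exact ((Real.tendsto_exp_atTop.comp l1).atTop_div_const (by norm_num))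
  have hbot : Tendsto (fun x : ℝ => Real.cosh (3*x/2)) atBot atTop := by
    have h := htop.comp tendsto_neg_atBot_atTop
    refine h.congr fun x => ?_
    simp only [Function.comp_apply]
    rw [show 3*(-x)/2 = -(3*x/2) by ring, Real.cosh_neg]
  have hzero : (∫ x : ℝ, 3/2 * ((s+1) * Real.cosh (3*x/2) ^ (-(s+2))
      - s * Real.cosh (3*x/2) ^ (-s))) = 0 - 0 :=
    integral_of_hasDerivAt_of_tendsto (fun x => hasDerivAt_aux s x) hint
      (tendsto_aux s hs atBot hbot) (tendsto_aux s hs atTop htop)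
  rw [sub_zero] at hzero
  rw [integral_const_mul] at hzero
  rw [integral_sub (hI2.const_mul (s+1)) (hI1.const_mul s), integral_const_mul,
    integral_const_mul] at hzero
  have h32 : (3/2 : ℝ) ≠ 0 := by norm_num
  have := mul_eq_zero.mp hzero
  rcases this with h | h
  · exact absurd h h32
  · linarith

lemma Q_rpow (x : ℝ) (p : ℝ) :
    (Q x) ^ p = (5/2 : ℝ) ^ (p/3) * Real.cosh (3*x/2) ^ (-(2*p/3)) := by
  have h52 : (0:ℝ) ≤ 5/2 := by norm_num
  have hc := Real.cosh_pos (x := 3*x/2)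
  unfold Q
  rw [Real.mul_rpow (Real.rpow_nonneg h52 _) (Real.rpow_nonneg hc.le _),
    ← Real.rpow_mul h52, ← Real.rpow_mul hc.le]
  congr 1 <;> ring_nf

theorem Q_power_integral : ∀ r : ℝ, 1 ≤ r →
    ∫ x : ℝ, (Q x) ^ (r + 3) = (5 * r / (2 * r + 3)) * ∫ x : ℝ, (Q x) ^ r := by
  intro r hr
  set s : ℝ := 2*r/3 with hs_def
  have hs : 0 < s := by rw [hs_def]; linarith
  have e1 : ∀ x : ℝ, (Q x) ^ (r+3) = (5/2 : ℝ) ^ (r/3) * (5/2) *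
      Real.cosh (3*x/2) ^ (-(s+2)) := by
    intro x
    rw [Q_rpow]
    rw [show (r+3)/3 = r/3 + 1 by ring, Real.rpow_add (by norm_num : (0:ℝ) < 5/2),
      Real.rpow_one]
    congr 2
    rw [hs_def]; ring
  have e2 : ∀ x : ℝ, (Q x) ^ r = (5/2 : ℝ) ^ (r/3) * Real.cosh (3*x/2) ^ (-s) := by
    intro x; rw [Q_rpow]
  simp only [e1, e2]
  rw [integral_const_mul, integral_const_mul]
  have hrec := cosh_int_rec s hs
  have hs1 : s + 1 ≠ 0 := by positivity
  have : (∫ x : ℝ, Real.cosh (3*x/2) ^ (-(s+2))) =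
      s / (s+1) * ∫ x : ℝ, Real.cosh (3*x/2) ^ (-s) := by
    rw [div_mul_eq_mul_div, eq_div_iff hs1, mul_comm]
    exact hrec
  rw [this]
  have h23 : (2*r+3 : ℝ) ≠ 0 := by linarith
  have hs1' : (s + 1 : ℝ) = (2*r+3)/3 := by rw [hs_def]; ring
  rw [hs_def] at *
  field_simp
end

section
/- ∫_ℝ e^{-x} Q(x)^4 dx = 2·10^{1/3}. -/
open Real MeasureTheory Filter Set Topology

/-- The integrand rewritten in terms of `1 + exp (3x)`. -/
lemma integrand_eq (x : ℝ) :
    Real.exp (-x) * (Q x)^4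
      = (10:ℝ)^((4:ℝ)/3) * Real.exp (3*x) * (1 + Real.exp (3*x)) ^ (-(8:ℝ)/3) := by
  have hA : (0:ℝ) < 1 + Real.exp (3*x) := by positivity
  have hc : (0:ℝ) < Real.cosh (3*x/2) := Real.cosh_pos _
  have h52 : (0:ℝ) < (5/2 : ℝ) := by norm_num
  have hQpos : 0 < Q x := by unfold Q; positivity
  have hL : (0:ℝ) < Real.exp (-x) * (Q x)^4 := by positivity
  have hR : (0:ℝ) < (10:ℝ)^((4:ℝ)/3) * Real.exp (3*x) * (1 + Real.exp (3*x)) ^ (-(8:ℝ)/3) := by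
    positivity
  rw [← Real.exp_log hL, ← Real.exp_log hR]
  congr 1
  have hcosh : Real.cosh (3*x/2) = Real.exp (-(3*x/2)) * (1 + Real.exp (3*x)) / 2 := by
    rw [Real.cosh_eq, mul_add, mul_one, ← Real.exp_add,
      show -(3*x/2) + 3*x = 3*x/2 by ring]
    ring
  have hlogcosh : Real.log (Real.cosh (3*x/2))
      = -(3*x/2) + Real.log (1 + Real.exp (3*x)) - Real.log 2 := by
    rw [hcosh, Real.log_div (by positivity) (by norm_num),
      Real.log_mul (Real.exp_ne_zero _) hA.ne', Real.log_exp]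
  have hlogQ : Real.log (Q x)
      = (1/3) * (Real.log 5 - Real.log 2)
        + (-(2:ℝ)/3) * (-(3*x/2) + Real.log (1 + Real.exp (3*x)) - Real.log 2) := by
    unfold Q
    rw [Real.log_mul (by positivity) (by positivity), Real.log_rpow h52, Real.log_rpow hc, hlogcosh,
      Real.log_div (by norm_num) (by norm_num)]
  have hlogL : Real.log (Real.exp (-x) * (Q x)^4) = -x + 4 * Real.log (Q x) := by
    rw [Real.log_mul (Real.exp_ne_zero _) (by positivity), Real.log_exp, Real.log_pow]
    push_cast; ring
  have hlog10 : Real.log 10 = Real.log 2 + Real.log 5 := by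
    rw [show (10:ℝ) = 2 * 5 by norm_num, Real.log_mul (by norm_num) (by norm_num)]
  have hlogR : Real.log ((10:ℝ)^((4:ℝ)/3) * Real.exp (3*x) * (1 + Real.exp (3*x)) ^ (-(8:ℝ)/3))
      = ((4:ℝ)/3) * Real.log 10 + 3*x + (-(8:ℝ)/3) * Real.log (1 + Real.exp (3*x)) := by
    rw [Real.log_mul (by positivity) (by positivity),
      Real.log_mul (by positivity) (Real.exp_ne_zero _),
      Real.log_rpow (by norm_num : (0:ℝ) < 10), Real.log_exp, Real.log_rpow hA]
  rw [hlogL, hlogR, hlogQ, hlog10]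
  ring

/-- The antiderivative. -/
noncomputable def F : ℝ → ℝ := fun x =>
  -((10:ℝ)^((4:ℝ)/3) / 5) * (1 + Real.exp (3*x)) ^ (-(5:ℝ)/3)

lemma F_hasDerivAt (x : ℝ) : HasDerivAt F (Real.exp (-x) * (Q x)^4) x := by
  have hA : (0:ℝ) < 1 + Real.exp (3*x) := by positivity
  have h1 : HasDerivAt (fun x : ℝ => 1 + Real.exp (3*x)) (3 * Real.exp (3*x)) x := by
    have h2 : HasDerivAt (fun x : ℝ => 3*x) 3 x := by
      simpa using (hasDerivAt_id x).const_mul 3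
    have := (Real.hasDerivAt_exp (3*x)).comp x h2
    simpa [mul_comm] using this.const_add 1
  have h3 := (h1.rpow_const (p := -(5:ℝ)/3) (Or.inl hA.ne')).const_mul
    (-((10:ℝ)^((4:ℝ)/3) / 5))
  refine h3.congr_deriv ?_
  rw [integrand_eq, show (-(5:ℝ)/3 - 1) = -(8:ℝ)/3 by norm_num]
  ring

lemma integrand_nonneg (x : ℝ) : 0 ≤ Real.exp (-x) * (Q x)^4 := by
  unfold Q; positivity

lemma Q_continuous : Continuous Q := by
  unfold Q
  refine continuous_const.mul ?_
  refine Continuous.rpow_const (Real.continuous_cosh.comp (by continuity)) fun x => ?_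
  exact Or.inl (Real.cosh_pos _).ne'

lemma integrand_integrable : Integrable (fun x : ℝ => Real.exp (-x) * (Q x)^4) := by
  have hmeas : Continuous (fun x : ℝ => Real.exp (-x) * (Q x)^4) :=
    (Real.continuous_exp.comp continuous_neg).mul (Q_continuous.pow 4)
  rw [← integrableOn_univ, ← Set.Iic_union_Ioi (a := (0:ℝ))]
  apply IntegrableOn.union
  · -- on Iic 0, dominated by C * exp x
    apply Integrable.mono' ((integrableOn_exp_Iic 0).const_mul ((10:ℝ)^((4:ℝ)/3)))
    · exact hmeas.aestronglyMeasurable.restrict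
    · refine (ae_restrict_iff' measurableSet_Iic).2 (ae_of_all _ fun x hx => ?_)
      rw [Real.norm_of_nonneg (integrand_nonneg x), integrand_eq]
      have hA : (0:ℝ) < 1 + Real.exp (3*x) := by positivity
      have h1 : (1 + Real.exp (3*x)) ^ (-(8:ℝ)/3) ≤ 1 :=
        Real.rpow_le_one_of_one_le_of_nonpos (by linarith [Real.exp_pos (3*x)]) (by norm_num)
      calc (10:ℝ)^((4:ℝ)/3) * Real.exp (3*x) * (1 + Real.exp (3*x)) ^ (-(8:ℝ)/3)
          ≤ (10:ℝ)^((4:ℝ)/3) * Real.exp (3*x) * 1 :=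
            mul_le_mul_of_nonneg_left h1 (by positivity)
        _ = (10:ℝ)^((4:ℝ)/3) * Real.exp (3*x) := by ring
        _ ≤ (10:ℝ)^((4:ℝ)/3) * Real.exp x := by
            apply mul_le_mul_of_nonneg_left _ (by positivity)
            apply Real.exp_le_exp.2
            simp only [mem_Iic] at hx; linarith
  · -- on Ioi 0, dominated by C * exp (-5x)
    apply Integrable.mono' ((exp_neg_integrableOn_Ioi 0 (by norm_num : (0:ℝ) < 5)).const_mul
      ((10:ℝ)^((4:ℝ)/3)))
    · exact hmeas.aestronglyMeasurable.restrict
    · refine (ae_restrict_iff' measurableSet_Ioi).2 (ae_of_all _ fun x _ => ?_)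
      rw [Real.norm_of_nonneg (integrand_nonneg x), integrand_eq]
      have hA : (0:ℝ) < 1 + Real.exp (3*x) := by positivity
      have h1 : (1 + Real.exp (3*x)) ^ (-(8:ℝ)/3) ≤ (Real.exp (3*x)) ^ (-(8:ℝ)/3) :=
        Real.rpow_le_rpow_of_nonpos (Real.exp_pos _) (by linarith) (by norm_num)
      have h2 : (Real.exp (3*x)) ^ (-(8:ℝ)/3) = Real.exp (-(8*x)) := by
        rw [← Real.exp_mul]; ring_nf
      calc (10:ℝ)^((4:ℝ)/3) * Real.exp (3*x) * (1 + Real.exp (3*x)) ^ (-(8:ℝ)/3)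
          ≤ (10:ℝ)^((4:ℝ)/3) * Real.exp (3*x) * Real.exp (-(8*x)) :=
            mul_le_mul_of_nonneg_left (h2 ▸ h1) (by positivity)
        _ = (10:ℝ)^((4:ℝ)/3) * Real.exp (-5*x) := by
            rw [mul_assoc, ← Real.exp_add]; ring_nf

theorem exp_Q4_integral :
    ∫ x : ℝ, Real.exp (-x) * (Q x)^4 = 2 * (10:ℝ) ^ ((1:ℝ)/3) := by
  have hbot : Tendsto F atBot (𝓝 (-((10:ℝ)^((4:ℝ)/3) / 5))) := by
    have h1 : Tendsto (fun x : ℝ => 1 + Real.exp (3*x)) atBot (𝓝 1) := by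
      have h0 : Tendsto (fun x : ℝ => 3*x) atBot atBot := by
        apply Tendsto.const_mul_atBot (by norm_num) tendsto_id
      simpa using (Real.tendsto_exp_atBot.comp h0).const_add 1
    have h2 : Tendsto (fun x : ℝ => (1 + Real.exp (3*x)) ^ (-(5:ℝ)/3)) atBot (𝓝 1) := by
      have := (Real.continuousAt_rpow_const 1 (-(5:ℝ)/3) (Or.inl one_ne_zero)).tendsto.comp h1
      simpa [Function.comp_def] using this
    have h3 := h2.const_mul (-((10:ℝ)^((4:ℝ)/3) / 5))
    rw [mul_one] at h3
    exact h3
  have htop : Tendsto F atTop (𝓝 0) := by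
    have h1 : Tendsto (fun x : ℝ => 1 + Real.exp (3*x)) atTop atTop := by
      have h0 : Tendsto (fun x : ℝ => 3*x) atTop atTop := by
        apply Tendsto.const_mul_atTop (by norm_num) tendsto_id
      exact tendsto_atTop_add_const_left _ 1 (Real.tendsto_exp_atTop.comp h0)
    have h2 : Tendsto (fun x : ℝ => (1 + Real.exp (3*x)) ^ (-(5:ℝ)/3)) atTop (𝓝 0) := by
      rw [show (-(5:ℝ)/3) = -((5:ℝ)/3) by norm_num]
      exact (tendsto_rpow_neg_atTop (by norm_num)).comp h1
    have h3 := h2.const_mul (-((10:ℝ)^((4:ℝ)/3) / 5))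
    rw [mul_zero] at h3
    exact h3
  rw [MeasureTheory.integral_of_hasDerivAt_of_tendsto F_hasDerivAt integrand_integrable hbot htop]
  have h10 : (10:ℝ)^((4:ℝ)/3) = 10 * (10:ℝ)^((1:ℝ)/3) := by
    rw [← Real.rpow_one_add' (by norm_num) (by norm_num)]
    norm_num
  rw [h10]; ring
end

section
/- (7/5)·∫_ℝ e^{-x} Q^5 dx = (3/2)·∫_ℝ e^{-x} Q^2 dx. -/
open MeasureTheory Real Set Filter Topology

-- lower bound for cosh
lemma cosh_lb (u : ℝ) : Real.exp |u| / 2 ≤ Real.cosh u := by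
  rw [Real.cosh_eq]
  rcases abs_cases u with ⟨h, _⟩ | ⟨h, _⟩ <;> rw [h] <;>
    [have := Real.exp_pos (-u); have := Real.exp_pos u] <;> linarith

lemma abs_sinh_le_cosh (u : ℝ) : |Real.sinh u| ≤ Real.cosh u := by
  rw [Real.abs_sinh, ← Real.cosh_abs u]
  have := Real.cosh_sub_sinh |u|
  have := Real.exp_pos (-|u|)
  linarith

-- generic bound
lemma gen_bound {b : ℝ} (hb1 : (4:ℝ)/3 ≤ b) (hb2 : b ≤ 4) (x : ℝ) :
    Real.exp (-x) * Real.cosh (3*x/2) ^ (-b) ≤ 16 * Real.exp (-|x|) := by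
  have hpos : (0:ℝ) < Real.exp |3*x/2| / 2 := by positivity
  have h1 : Real.cosh (3*x/2) ^ (-b) ≤ (Real.exp |3*x/2| / 2) ^ (-b) :=
    Real.rpow_le_rpow_of_nonpos hpos (cosh_lb _) (by linarith)
  have h2 : (Real.exp |3*x/2| / 2) ^ (-b) = 2 ^ b * Real.exp (-(b * |3*x/2|)) := by
    rw [Real.div_rpow (Real.exp_pos _).le (by norm_num), Real.rpow_neg (Real.exp_pos _).le,
      Real.rpow_neg (by norm_num : (0:ℝ) ≤ 2), ← Real.exp_mul]
    rw [Real.exp_neg, mul_comm b]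
    field_simp
  have h3 : (2:ℝ) ^ b ≤ 16 := by
    calc (2:ℝ) ^ b ≤ 2 ^ (4:ℝ) := Real.rpow_le_rpow_of_exponent_le (by norm_num) hb2
    _ = 16 := by
        rw [show (4:ℝ) = ((4:ℕ):ℝ) by norm_num, Real.rpow_natCast]; norm_num
  have habs : |3*x/2| = 3/2 * |x| := by
    rw [abs_div, abs_mul]; simp [abs_of_nonneg]; ring
  have h4 : Real.exp (-(b * |3*x/2|)) ≤ Real.exp (-(2 * |x|)) := by
    rw [Real.exp_le_exp, habs]
    have h5 : 2 * |x| ≤ b * (3/2 * |x|) := by nlinarith [abs_nonneg x]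
    linarith
  have h6 : Real.exp (-x) ≤ Real.exp |x| := Real.exp_le_exp.mpr (neg_le_abs x)
  calc Real.exp (-x) * Real.cosh (3*x/2) ^ (-b)
      ≤ Real.exp |x| * (16 * Real.exp (-(2*|x|))) := by
        have hc : (0:ℝ) ≤ Real.cosh (3*x/2) ^ (-b) := (Real.rpow_pos_of_pos (Real.cosh_pos _) _).le
        have := mul_le_mul h6 (h1.trans (h2 ▸ mul_le_mul h3 h4 (Real.exp_pos _).le (by norm_num)))
          (by positivity) (Real.exp_pos _).le
        linarith [this]
    _ = 16 * Real.exp (-|x|) := by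
        rw [show Real.exp |x| * (16 * Real.exp (-(2*|x|))) = 16 * (Real.exp |x| * Real.exp (-(2*|x|))) by ring,
          ← Real.exp_add]
        ring_nf

noncomputable def fA (x : ℝ) : ℝ := Real.exp (-x) * Real.cosh (3*x/2) ^ (-(4:ℝ)/3)
noncomputable def fB (x : ℝ) : ℝ := Real.exp (-x) * Real.cosh (3*x/2) ^ (-(10:ℝ)/3)
noncomputable def fS (x : ℝ) : ℝ :=
  Real.exp (-x) * (Real.sinh (3*x/2) * Real.cosh (3*x/2) ^ (-(7:ℝ)/3))

lemma hasDerivAt_lin (x : ℝ) : HasDerivAt (fun x : ℝ => 3*x/2) (3/2) x := by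
  have h : HasDerivAt (fun x : ℝ => 3*x/2) (3*1/2) x := ((hasDerivAt_id x).const_mul 3).div_const 2
  simpa using h

lemma hasDerivAt_ch (x : ℝ) :
    HasDerivAt (fun x : ℝ => Real.cosh (3*x/2)) (Real.sinh (3*x/2) * (3/2)) x :=
  (hasDerivAt_lin x).cosh

lemma hasDerivAt_sh (x : ℝ) :
    HasDerivAt (fun x : ℝ => Real.sinh (3*x/2)) (Real.cosh (3*x/2) * (3/2)) x :=
  (hasDerivAt_lin x).sinh

lemma hasDerivAt_chpow (r : ℝ) (x : ℝ) :
    HasDerivAt (fun x : ℝ => Real.cosh (3*x/2) ^ r)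
      (r * Real.cosh (3*x/2) ^ (r - 1) * (Real.sinh (3*x/2) * (3/2))) x := by
  have h := (hasDerivAt_ch x).rpow_const (p := r) (Or.inl (Real.cosh_pos _).ne')
  convert h using 1
  ring

lemma hasDerivAt_nexp (x : ℝ) : HasDerivAt (fun x : ℝ => Real.exp (-x)) (-Real.exp (-x)) x := by
  simpa using ((hasDerivAt_id x).neg).exp

lemma ch_rpow_add (a c : ℝ) (x : ℝ) :
    Real.cosh (3*x/2) ^ a * Real.cosh (3*x/2) ^ c = Real.cosh (3*x/2) ^ (a + c) :=
  (Real.rpow_add (Real.cosh_pos _) a c).symm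

lemma hasDerivAt_G (x : ℝ) :
    HasDerivAt (fun x => Real.exp (-x) * Real.cosh (3*x/2) ^ (-(4:ℝ)/3))
      (-fA x - 2 * fS x) x := by
  have h := (hasDerivAt_nexp x).fun_mul (hasDerivAt_chpow (-(4:ℝ)/3) x)
  refine h.congr_deriv (Eq.symm ?_)
  simp only [fA, fS]
  have e1 : (-(4:ℝ)/3 - 1) = -(7:ℝ)/3 := by norm_num
  rw [e1]
  ring

lemma hasDerivAt_F (x : ℝ) :
    HasDerivAt (fun x => Real.exp (-x) * (Real.sinh (3*x/2) * Real.cosh (3*x/2) ^ (-(7:ℝ)/3)))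
      (-fS x - 2 * fA x + (7/2) * fB x) x := by
  have hin := (hasDerivAt_sh x).fun_mul (hasDerivAt_chpow (-(7:ℝ)/3) x)
  have h := (hasDerivAt_nexp x).fun_mul hin
  refine h.congr_deriv (Eq.symm ?_)
  simp only [fA, fS, fB]
  have e1 : (-(7:ℝ)/3 - 1) = -(10:ℝ)/3 := by norm_num
  rw [e1]
  -- use sinh^2 = cosh^2 - 1 and cosh * cosh^(-7/3) = cosh^(-4/3), cosh^2 * cosh^(-10/3) = cosh^(-4/3)
  have hch := Real.cosh_pos (3*x/2)
  have hs2 : Real.sinh (3*x/2) ^ 2 = Real.cosh (3*x/2) ^ 2 - 1 := by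
    have := Real.cosh_sq' (3*x/2); linarith
  have h1 : Real.cosh (3*x/2) * Real.cosh (3*x/2) ^ (-(7:ℝ)/3)
      = Real.cosh (3*x/2) ^ (-(4:ℝ)/3) := by
    nth_rewrite 1 [← Real.rpow_one (Real.cosh (3*x/2))]
    rw [ch_rpow_add]
    norm_num
  have h2 : Real.cosh (3*x/2) ^ 2 * Real.cosh (3*x/2) ^ (-(10:ℝ)/3)
      = Real.cosh (3*x/2) ^ (-(4:ℝ)/3) := by
    rw [← Real.rpow_natCast (Real.cosh (3*x/2)) 2, ch_rpow_add]
    norm_num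
  have expand : Real.sinh (3*x/2) * (-(7:ℝ)/3 * Real.cosh (3*x/2) ^ (-(10:ℝ)/3)
      * (Real.sinh (3*x/2) * (3/2)))
      = -(7/2) * (Real.sinh (3*x/2) ^ 2 * Real.cosh (3*x/2) ^ (-(10:ℝ)/3)) := by ring
  calc -(Real.exp (-x) * (Real.sinh (3*x/2) * Real.cosh (3*x/2) ^ (-(7:ℝ)/3)))
        - 2 * (Real.exp (-x) * Real.cosh (3*x/2) ^ (-(4:ℝ)/3))
        + 7/2 * (Real.exp (-x) * Real.cosh (3*x/2) ^ (-(10:ℝ)/3))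
      = -Real.exp (-x) * (Real.sinh (3*x/2) * Real.cosh (3*x/2) ^ (-(7:ℝ)/3)) +
        Real.exp (-x) * (Real.cosh (3*x/2) * (3/2) * Real.cosh (3*x/2) ^ (-(7:ℝ)/3) +
          (-(7/2)) * (Real.sinh (3*x/2) ^ 2 * Real.cosh (3*x/2) ^ (-(10:ℝ)/3))) := by
        rw [hs2]
        rw [show (Real.cosh (3*x/2) ^ 2 - 1) * Real.cosh (3*x/2) ^ (-(10:ℝ)/3)
          = Real.cosh (3*x/2) ^ 2 * Real.cosh (3*x/2) ^ (-(10:ℝ)/3)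
            - Real.cosh (3*x/2) ^ (-(10:ℝ)/3) by ring, h2]
        rw [show Real.cosh (3*x/2) * (3/2) * Real.cosh (3*x/2) ^ (-(7:ℝ)/3)
          = (3/2) * (Real.cosh (3*x/2) * Real.cosh (3*x/2) ^ (-(7:ℝ)/3)) by ring, h1]
        ring
    _ = _ := by rw [← expand]

lemma int_exp_abs : Integrable (fun x : ℝ => Real.exp (-|x|)) := by
  have h1 : IntegrableOn (fun x : ℝ => Real.exp (-|x|)) (Ioi 0) := by
    refine (exp_neg_integrableOn_Ioi 0 one_pos).congr_fun ?_ measurableSet_Ioi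
    intro x hx
    simp [abs_of_pos (mem_Ioi.mp hx)]
  have h2 : IntegrableOn (fun x : ℝ => Real.exp (-|x|)) (Iic 0) := by
    refine (integrableOn_exp_Iic 0).congr_fun ?_ measurableSet_Iic
    intro x hx
    simp [abs_of_nonpos (mem_Iic.mp hx)]
  refine integrableOn_univ.mp ?_
  rw [← Set.Iic_union_Ioi (a := (0:ℝ))]
  exact h2.union h1

lemma int_g : Integrable (fun x : ℝ => 16 * Real.exp (-|x|)) := int_exp_abs.const_mul 16

lemma cont_chpow (r : ℝ) : Continuous fun x : ℝ => Real.cosh (3*x/2) ^ r :=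
  Continuous.rpow_const (Real.continuous_cosh.comp (by continuity))
    (fun x => Or.inl (Real.cosh_pos _).ne')

lemma cont_nexp : Continuous fun x : ℝ => Real.exp (-x) := Real.continuous_exp.comp continuous_neg

lemma fA_nonneg (x : ℝ) : 0 ≤ fA x := by
  unfold fA; positivity

lemma fB_nonneg (x : ℝ) : 0 ≤ fB x := by
  unfold fB; positivity

lemma fA_bound (x : ℝ) : ‖fA x‖ ≤ 16 * Real.exp (-|x|) := by
  rw [Real.norm_eq_abs, abs_of_nonneg (fA_nonneg x)]
  have h := gen_bound (b := 4/3) le_rfl (by norm_num) x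
  have e : -((4:ℝ)/3) = -(4:ℝ)/3 := by norm_num
  rw [e] at h
  exact h

lemma fB_bound (x : ℝ) : ‖fB x‖ ≤ 16 * Real.exp (-|x|) := by
  rw [Real.norm_eq_abs, abs_of_nonneg (fB_nonneg x)]
  have h := gen_bound (b := 10/3) (by norm_num) (by norm_num) x
  have e : -((10:ℝ)/3) = -(10:ℝ)/3 := by norm_num
  rw [e] at h
  exact h

lemma fS_abs_le (x : ℝ) : ‖fS x‖ ≤ fA x := by
  rw [Real.norm_eq_abs]
  unfold fS fA
  rw [abs_mul, abs_of_nonneg (Real.exp_pos _).le, abs_mul,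
    abs_of_nonneg (Real.rpow_pos_of_pos (Real.cosh_pos _) _).le]
  have h1 : |Real.sinh (3*x/2)| * Real.cosh (3*x/2) ^ (-(7:ℝ)/3)
      ≤ Real.cosh (3*x/2) * Real.cosh (3*x/2) ^ (-(7:ℝ)/3) :=
    mul_le_mul_of_nonneg_right (abs_sinh_le_cosh _)
      (Real.rpow_pos_of_pos (Real.cosh_pos _) _).le
  have h2 : Real.cosh (3*x/2) * Real.cosh (3*x/2) ^ (-(7:ℝ)/3)
      = Real.cosh (3*x/2) ^ (-(4:ℝ)/3) := by
    nth_rewrite 1 [← Real.rpow_one (Real.cosh (3*x/2))]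
    rw [ch_rpow_add]
    norm_num
  rw [h2] at h1
  exact mul_le_mul_of_nonneg_left h1 (Real.exp_pos _).le

lemma fA_bound' (x : ℝ) : fA x ≤ 16 * Real.exp (-|x|) := by
  have := fA_bound x
  rwa [Real.norm_eq_abs, abs_of_nonneg (fA_nonneg x)] at this

lemma fS_bound (x : ℝ) : ‖fS x‖ ≤ 16 * Real.exp (-|x|) := (fS_abs_le x).trans (fA_bound' x)

lemma intA : Integrable fA :=
  int_g.mono' ((cont_nexp.mul (cont_chpow _)).aestronglyMeasurable)
    (Filter.Eventually.of_forall fA_bound)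

lemma intB : Integrable fB :=
  int_g.mono' ((cont_nexp.mul (cont_chpow _)).aestronglyMeasurable)
    (Filter.Eventually.of_forall fB_bound)

lemma intS : Integrable fS :=
  int_g.mono' ((cont_nexp.mul ((Real.continuous_sinh.comp (by continuity)).mul
    (cont_chpow _))).aestronglyMeasurable) (Filter.Eventually.of_forall fS_bound)

lemma tend_top : Tendsto (fun x : ℝ => 16 * Real.exp (-|x|)) atTop (𝓝 0) := by
  have h : Tendsto (fun x : ℝ => -|x|) atTop atBot :=
    tendsto_neg_atTop_atBot.comp tendsto_abs_atTop_atTop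
  simpa using (Real.tendsto_exp_atBot.comp h).const_mul (16:ℝ)

lemma tend_bot : Tendsto (fun x : ℝ => 16 * Real.exp (-|x|)) atBot (𝓝 0) := by
  have h : Tendsto (fun x : ℝ => -|x|) atBot atBot :=
    tendsto_neg_atTop_atBot.comp tendsto_abs_atBot_atTop
  simpa using (Real.tendsto_exp_atBot.comp h).const_mul (16:ℝ)

lemma eq1 : ∫ x : ℝ, fA x = -2 * ∫ x : ℝ, fS x := by
  have hint : Integrable (fun x => -fA x - 2 * fS x) := (intA.neg).sub (intS.const_mul 2)
  have h0 : ∫ x : ℝ, (-fA x - 2 * fS x) = 0 - 0 :=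
    integral_of_hasDerivAt_of_tendsto hasDerivAt_G hint
      (squeeze_zero_norm fA_bound tend_bot) (squeeze_zero_norm fA_bound tend_top)
  have hnegA : Integrable (fun x => -fA x) := intA.neg
  have h2S : Integrable (fun x => 2 * fS x) := intS.const_mul 2
  have lin : ∫ x : ℝ, (-fA x - 2 * fS x) = (∫ x : ℝ, -fA x) - ∫ x : ℝ, 2 * fS x :=
    integral_sub hnegA h2S
  rw [lin, integral_neg, integral_const_mul] at h0
  linarith [h0]

lemma eq2 : -(∫ x : ℝ, fS x) - 2 * (∫ x : ℝ, fA x) + (7/2) * (∫ x : ℝ, fB x) = 0 := by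
  have hint : Integrable (fun x => -fS x - 2 * fA x + (7/2) * fB x) :=
    ((intS.neg).sub (intA.const_mul 2)).add (intB.const_mul (7/2))
  have h0 : ∫ x : ℝ, (-fS x - 2 * fA x + (7/2) * fB x) = 0 - 0 :=
    integral_of_hasDerivAt_of_tendsto hasDerivAt_F hint
      (squeeze_zero_norm fS_bound tend_bot) (squeeze_zero_norm fS_bound tend_top)
  have hnegS : Integrable (fun x => -fS x) := intS.neg
  have h2A : Integrable (fun x => 2 * fA x) := intA.const_mul 2
  have hsub : Integrable (fun x => -fS x - 2 * fA x) := hnegS.sub h2A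
  have h72B : Integrable (fun x => (7/2) * fB x) := intB.const_mul (7/2)
  have lin : ∫ x : ℝ, (-fS x - 2 * fA x + (7/2) * fB x)
      = ((∫ x : ℝ, -fS x) - ∫ x : ℝ, 2 * fA x) + ∫ x : ℝ, (7/2) * fB x := by
    rw [integral_add hsub h72B, integral_sub hnegS h2A]
  rw [lin, integral_neg, integral_const_mul, integral_const_mul] at h0
  linarith [h0]

lemma keyAB : 7 * (∫ x : ℝ, fB x) = 3 * (∫ x : ℝ, fA x) := by
  have h1 := eq1
  have h2 := eq2
  linarith [h1, h2]

theorem exp_Q5_Q2_integral :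
    (7/5) * ∫ x : ℝ, Real.exp (-x) * (Q x)^5 = (3/2) * ∫ x : ℝ, Real.exp (-x) * (Q x)^2 := by
  have hQ5 : ∀ x : ℝ, Real.exp (-x) * (Q x)^5 = (5/2 : ℝ) ^ ((5:ℝ)/3) * fB x := by
    intro x
    unfold Q fB
    rw [mul_pow, ← Real.rpow_natCast ((5/2 : ℝ) ^ ((1:ℝ)/3)) 5,
      ← Real.rpow_mul (by norm_num : (0:ℝ) ≤ 5/2),
      ← Real.rpow_natCast ((Real.cosh (3*x/2)) ^ (-(2:ℝ)/3)) 5,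
      ← Real.rpow_mul (Real.cosh_pos _).le]
    norm_num
    ring
  have hQ2 : ∀ x : ℝ, Real.exp (-x) * (Q x)^2 = (5/2 : ℝ) ^ ((2:ℝ)/3) * fA x := by
    intro x
    unfold Q fA
    rw [mul_pow, ← Real.rpow_natCast ((5/2 : ℝ) ^ ((1:ℝ)/3)) 2,
      ← Real.rpow_mul (by norm_num : (0:ℝ) ≤ 5/2),
      ← Real.rpow_natCast ((Real.cosh (3*x/2)) ^ (-(2:ℝ)/3)) 2,
      ← Real.rpow_mul (Real.cosh_pos _).le]
    norm_num
    ring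
  simp_rw [hQ5, hQ2, integral_const_mul]
  have hc : (5/2 : ℝ) ^ ((5:ℝ)/3) = (5/2 : ℝ) ^ ((2:ℝ)/3) * (5/2) := by
    nth_rewrite 3 [← Real.rpow_one (5/2 : ℝ)]
    rw [← Real.rpow_add (by norm_num : (0:ℝ) < 5/2)]
    norm_num
  rw [hc]
  have key := keyAB
  linear_combination ((5/2 : ℝ) ^ ((2:ℝ)/3) / 2) * key
end

section
/- Fix μ₀ > 0, Y₀ ∈ ℝ and α > 0 with μ₀ = √α · e^{-Y₀/2}. The function Y(t) = Y₀ + 2·ln(cosh(μ₀ t)) satisfies Ÿ(t) = 2α e^{-Y(t)} for all t, Ẏ(0) = 0, Ẏ(t) → ±2μ₀ as t → ±∞, and moreover 0 ≤ Y(t) - (Y₀ + 2μ₀|t| - 2 ln 2) ≤ 2 e^{-2μ₀|t|} for all t ∈ ℝ. -/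
open Real Filter

private lemma Yd (μ₀ Y₀ : ℝ) (t : ℝ) :
    HasDerivAt (fun t => Y₀ + 2 * Real.log (Real.cosh (μ₀ * t)))
      (2 * μ₀ * (Real.sinh (μ₀ * t) / Real.cosh (μ₀ * t))) t := by
  have h1 : HasDerivAt (fun t : ℝ => μ₀ * t) μ₀ t := by
    simpa using (hasDerivAt_id t).const_mul μ₀
  have h2 : HasDerivAt (fun t : ℝ => Real.cosh (μ₀ * t)) (Real.sinh (μ₀ * t) * μ₀) t :=
    (Real.hasDerivAt_cosh (μ₀ * t)).comp t h1
  have h3 : HasDerivAt (fun t : ℝ => Real.log (Real.cosh (μ₀ * t)))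
      ((Real.cosh (μ₀ * t))⁻¹ * (Real.sinh (μ₀ * t) * μ₀)) t :=
    by have := (Real.hasDerivAt_log (Real.cosh_pos (x := μ₀ * t)).ne').comp t h2; exact this
  have := (h3.const_mul 2).const_add Y₀
  refine this.congr_deriv ?_
  ring

private lemma derivY (μ₀ Y₀ : ℝ) :
    deriv (fun t => Y₀ + 2 * Real.log (Real.cosh (μ₀ * t)))
      = fun t => 2 * μ₀ * (Real.sinh (μ₀ * t) / Real.cosh (μ₀ * t)) := by
  funext t; exact (Yd μ₀ Y₀ t).deriv

private lemma tanh_tendsto_atTop :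
    Tendsto (fun x : ℝ => Real.sinh x / Real.cosh x) atTop (nhds 1) := by
  have key : ∀ x : ℝ, Real.sinh x / Real.cosh x
      = (1 - Real.exp (-2 * x)) / (1 + Real.exp (-2 * x)) := by
    intro x
    rw [Real.sinh_eq, Real.cosh_eq]
    have h : Real.exp (-x) = Real.exp x * Real.exp (-2 * x) := by
      rw [← Real.exp_add]; ring_nf
    rw [h]
    have h2 : (0:ℝ) < 1 + Real.exp (-2 * x) := by positivity
    have h3 := Real.exp_pos x
    field_simp
  simp_rw [key]
  have h0 : Tendsto (fun x : ℝ => Real.exp (-2 * x)) atTop (nhds 0) := by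
    apply Real.tendsto_exp_atBot.comp
    exact (tendsto_id.const_mul_atTop_of_neg (by norm_num)).comp tendsto_id
  have hn : Tendsto (fun x : ℝ => 1 - Real.exp (-2 * x)) atTop (nhds 1) := by
    simpa using tendsto_const_nhds.sub h0
  have hdn : Tendsto (fun x : ℝ => 1 + Real.exp (-2 * x)) atTop (nhds 1) := by
    simpa using tendsto_const_nhds.add h0
  have h : Tendsto (fun x : ℝ => (1 - Real.exp (-2 * x)) / (1 + Real.exp (-2 * x))) atTop
    (nhds (1 / 1)) := hn.div hdn one_ne_zero
  rw [div_one] at h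
  exact h

private lemma tanh_tendsto_atBot :
    Tendsto (fun x : ℝ => Real.sinh x / Real.cosh x) atBot (nhds (-1)) := by
  have : Tendsto (fun x : ℝ => -(Real.sinh (-x) / Real.cosh (-x))) atBot (nhds (-1)) := by
    have := (tanh_tendsto_atTop.comp tendsto_neg_atBot_atTop).neg
    simpa using this
  simpa [Real.sinh_neg, Real.cosh_neg, neg_div] using this

private lemma log_cosh_eq (a : ℝ) :
    Real.log (Real.cosh a) = a - Real.log 2 + Real.log (1 + Real.exp (-2 * a)) := by
  have h : Real.cosh a = Real.exp a * (1 + Real.exp (-2 * a)) / 2 := by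
    rw [Real.cosh_eq]
    have : Real.exp (-a) = Real.exp a * Real.exp (-2 * a) := by
      rw [← Real.exp_add]; ring_nf
    rw [this]; ring
  rw [h, Real.log_div (by positivity) (by norm_num),
    Real.log_mul (Real.exp_pos a).ne' (by positivity), Real.log_exp]
  ring

theorem Y_ode (α μ₀ Y₀ : ℝ) (hα : 0 < α) (hμ : 0 < μ₀)
    (hrel : μ₀ ^ 2 = α * Real.exp (-Y₀)) :
    let Y : ℝ → ℝ := fun t => Y₀ + 2 * Real.log (Real.cosh (μ₀ * t))
    (∀ t : ℝ, deriv (deriv Y) t = 2 * α * Real.exp (-Y t)) ∧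
    deriv Y 0 = 0 ∧
    Filter.Tendsto (deriv Y) Filter.atTop (nhds (2 * μ₀)) ∧
    Filter.Tendsto (deriv Y) Filter.atBot (nhds (-(2 * μ₀))) ∧
    (∀ t : ℝ, 0 ≤ Y t - (Y₀ + 2 * μ₀ * |t| - 2 * Real.log 2) ∧
      Y t - (Y₀ + 2 * μ₀ * |t| - 2 * Real.log 2) ≤ 2 * Real.exp (-2 * μ₀ * |t|)) := by
  intro Y
  have hd := derivY μ₀ Y₀
  refine ⟨?_, ?_, ?_, ?_, ?_⟩
  · intro t
    rw [hd]
    have hc := Real.cosh_pos (x := μ₀ * t)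
    have h1 : HasDerivAt (fun t : ℝ => μ₀ * t) μ₀ t := by
      simpa using (hasDerivAt_id t).const_mul μ₀
    have hs : HasDerivAt (fun t : ℝ => Real.sinh (μ₀ * t)) (Real.cosh (μ₀ * t) * μ₀) t :=
      (Real.hasDerivAt_sinh (μ₀ * t)).comp t h1
    have hc' : HasDerivAt (fun t : ℝ => Real.cosh (μ₀ * t)) (Real.sinh (μ₀ * t) * μ₀) t :=
      (Real.hasDerivAt_cosh (μ₀ * t)).comp t h1
    have hq : HasDerivAt (fun t : ℝ => 2 * μ₀ * (Real.sinh (μ₀ * t) / Real.cosh (μ₀ * t)))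
        (2 * μ₀ * ((Real.cosh (μ₀ * t) * μ₀ * Real.cosh (μ₀ * t)
          - Real.sinh (μ₀ * t) * (Real.sinh (μ₀ * t) * μ₀)) / Real.cosh (μ₀ * t) ^ 2)) t :=
      (hs.div hc' hc.ne').const_mul (2 * μ₀)
    rw [hq.deriv]
    have hsq : Real.cosh (μ₀ * t) ^ 2 - Real.sinh (μ₀ * t) ^ 2 = 1 :=
      Real.cosh_sq_sub_sinh_sq (μ₀ * t)
    have hY : Real.exp (-Y t) = Real.exp (-Y₀) / Real.cosh (μ₀ * t) ^ 2 := by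
      show Real.exp (-(Y₀ + 2 * Real.log (Real.cosh (μ₀ * t)))) = _
      rw [neg_add, Real.exp_add, Real.exp_neg]
      rw [show (2 : ℝ) * Real.log (Real.cosh (μ₀ * t))
        = Real.log (Real.cosh (μ₀ * t) ^ 2) by
          rw [Real.log_pow]; push_cast; ring]
      rw [Real.exp_neg, Real.exp_log (by positivity)]
      ring
    rw [hY]
    have hrel' : α * Real.exp (-Y₀) = μ₀ ^ 2 := hrel.symm
    field_simp
    nlinarith [hsq, hc]
  · rw [hd]; simp
  · rw [hd]
    have : Tendsto (fun t : ℝ => μ₀ * t) atTop atTop := by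
      exact (tendsto_id.const_mul_atTop hμ)
    have h := (tanh_tendsto_atTop.comp this).const_mul (2 * μ₀)
    simpa [Function.comp, mul_one] using h
  · rw [hd]
    have : Tendsto (fun t : ℝ => μ₀ * t) atBot atBot := by
      exact (tendsto_id.const_mul_atBot hμ)
    have h := (tanh_tendsto_atBot.comp this).const_mul (2 * μ₀)
    have : (2 * μ₀) * (-1) = -(2 * μ₀) := by ring
    simpa [Function.comp, this] using h
  · intro t
    have habs : Real.cosh (μ₀ * t) = Real.cosh (μ₀ * |t|) := by
      rw [← Real.cosh_abs, abs_mul, abs_of_pos hμ]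
    have key : Y t - (Y₀ + 2 * μ₀ * |t| - 2 * Real.log 2)
        = 2 * Real.log (1 + Real.exp (-2 * μ₀ * |t|)) := by
      show Y₀ + 2 * Real.log (Real.cosh (μ₀ * t)) - _ = _
      rw [habs, log_cosh_eq (μ₀ * |t|)]
      ring_nf
    rw [key]
    have hu : (0:ℝ) < Real.exp (-2 * μ₀ * |t|) := Real.exp_pos _
    constructor
    · have : (0:ℝ) ≤ Real.log (1 + Real.exp (-2 * μ₀ * |t|)) :=
        Real.log_nonneg (by linarith)
      linarith
    · have := Real.log_le_sub_one_of_pos (x := 1 + Real.exp (-2 * μ₀ * |t|)) (by linarith)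
      linarith
end
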